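/- Let λ ≥ 1 and let X be a λ-extendably locally reflexive complex Banach space. Then for all finite-dimensional subspaces F ⊆ X* and G ⊆ X** and every ε > 0, there exists a bounded linear operator T : X** → X** such that T(G) ⊆ ι_X(X), (Tg)(f) = g(f) for all g ∈ G and f ∈ F, ‖T‖ < λ + ε, and moreover Tg = g for every g ∈ G ∩ ι_X(X). -/

import Mathlib

set_option maxHeartbeats 4000000
set_option synthInstance.maxHeartbeats 100000

/-- The topological dual, with its meaning in the older Mathlib (`NormedSpace.Dual`). -/
abbrev NormedSpace.Dual (𝕜 : Type*) (E : Type*) [NontriviallyNormedField 𝕜] [SeminormedAddCommGroup E]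
    [NormedSpace 𝕜 E] : Type _ :=
  E →L[𝕜] 𝕜

open NormedSpace

/-- `X` is `λ`-extendably locally reflexive. -/
def IsELR (X : Type*) [NormedAddCommGroup X] [NormedSpace ℂ X] (lam : ℝ) : Prop :=
  ∀ (F : Subspace ℂ (Dual ℂ X)) (G : Subspace ℂ (Dual ℂ (Dual ℂ X))),
    FiniteDimensional ℂ F → FiniteDimensional ℂ G →
    ∀ ε : ℝ, 0 < ε →
      ∃ T : Dual ℂ (Dual ℂ X) →L[ℂ] Dual ℂ (Dual ℂ X),
        (∀ g ∈ G, T g ∈ Set.range (inclusionInDoubleDual ℂ X)) ∧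
        (∀ g ∈ G, ∀ f ∈ F, T g f = g f) ∧
        ‖T‖ < lam + ε

/-- If `X` is `λ`-extendably locally reflexive, then the local reflexivity operators
`T : X** → X**` can in addition be chosen with `Tg = g` for every `g ∈ G ∩ ι_X(X)`. -/
theorem stmt4 (X : Type*) [NormedAddCommGroup X] [NormedSpace ℂ X] [CompleteSpace X]
    (lam : ℝ) (hlam : 1 ≤ lam) (hELR : IsELR X lam) :
    ∀ (F : Subspace ℂ (Dual ℂ X)) (G : Subspace ℂ (Dual ℂ (Dual ℂ X))),
      FiniteDimensional ℂ F → FiniteDimensional ℂ G →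
      ∀ ε : ℝ, 0 < ε →
        ∃ T : Dual ℂ (Dual ℂ X) →L[ℂ] Dual ℂ (Dual ℂ X),
          (∀ g ∈ G, T g ∈ Set.range (inclusionInDoubleDual ℂ X)) ∧
          (∀ g ∈ G, ∀ f ∈ F, T g f = g f) ∧
          ‖T‖ < lam + ε ∧
          (∀ g ∈ G, g ∈ Set.range (inclusionInDoubleDual ℂ X) → T g = g) := by
  intro F G hF hG ε hε
  haveI := hF; haveI := hG
  haveI : @IsTopologicalAddGroup ℂ _ Complex.addCommGroup.toAddGroup := inferInstance
  set j := inclusionInDoubleDual ℂ X with hj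
  have hjnorm : ∀ y : X, ‖j y‖ = ‖y‖ := fun y =>
    (inclusionInDoubleDualLi ℂ (E := X)).norm_map y
  -- the range of `j` as a submodule
  set R : Subspace ℂ (Dual ℂ (Dual ℂ X)) := LinearMap.range (j : X →ₗ[ℂ] Dual ℂ (Dual ℂ X)) with hRdef
  have hRmem : ∀ g, g ∈ R ↔ g ∈ Set.range j := by
    intro g
    simp [hRdef, LinearMap.mem_range, Set.mem_range]
  -- G₀ = G ∩ j(X)
  set G₀ : Subspace ℂ (Dual ℂ (Dual ℂ X)) := G ⊓ R with hG₀def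
  haveI : FiniteDimensional ℂ G₀ :=
    Submodule.finiteDimensional_of_le (inf_le_left : G₀ ≤ G)
  set m := Module.finrank ℂ G₀ with hm
  haveI : Module.Free ℂ G₀ := Module.Free.of_divisionRing ℂ G₀
  let b : Module.Basis (Fin m) ℂ G₀ := Module.finBasis ℂ G₀
  have hbG : ∀ i, ((b i : Dual ℂ (Dual ℂ X))) ∈ G := fun i => (b i).2.1
  have hbR : ∀ i, ((b i : Dual ℂ (Dual ℂ X))) ∈ Set.range j :=
    fun i => (hRmem _).1 (b i).2.2
  choose x hx using hbR
  -- a continuous projection onto G₀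
  obtain ⟨p, hp⟩ := Submodule.ClosedComplemented.of_finiteDimensional (𝕜 := ℂ) (F := Dual ℂ (Dual ℂ X)) G₀
  -- coordinate functionals
  let c : Fin m → (G₀ →L[ℂ] ℂ) := fun i => ⟨b.coord i, by exact LinearMap.continuous_of_finiteDimensional (𝕜 := ℂ) (E := G₀) (F' := ℂ) (b.coord i)⟩
  set M : ℝ := ∑ i, ‖c i‖ with hMdef
  have hM : 0 ≤ M := Finset.sum_nonneg fun i _ => (c i).opNorm_nonneg
  set δ : ℝ := ε / (2 * (M * ‖p‖ + 1)) with hδdef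
  have hδpos : 0 < δ := by
    apply div_pos hε
    nlinarith [p.opNorm_nonneg, hM, mul_nonneg hM p.opNorm_nonneg]
  -- the admissibility predicate
  set P : (Dual ℂ (Dual ℂ X) →L[ℂ] Dual ℂ (Dual ℂ X)) → Prop := fun T =>
    (∀ g ∈ G, T g ∈ Set.range j) ∧ (∀ g ∈ G, ∀ f ∈ F, T g f = g f) ∧
      ‖T‖ ≤ lam + ε / 2 with hPdef
  -- the approximating set
  set K : Set (Fin m → X) :=
    {v | ∃ T, P T ∧ ∀ i, j (v i) = T ((b i : Dual ℂ (Dual ℂ X)))} with hKdef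
  have hKconv : Convex ℝ K := by
    rintro v ⟨T, ⟨hT1, hT2, hT3⟩, hvT⟩ w ⟨S, ⟨hS1, hS2, hS3⟩, hwT⟩ a a' ha ha' haa
    refine ⟨(a : ℂ) • T + (a' : ℂ) • S, ⟨?_, ?_, ?_⟩, ?_⟩
    · intro g hg
      rw [← hRmem]
      exact R.add_mem (R.smul_mem _ ((hRmem _).2 (hT1 g hg)))
        (R.smul_mem _ ((hRmem _).2 (hS1 g hg)))
    · intro g hg f hf
      have h1 := hT2 g hg f hf
      have h2 := hS2 g hg f hf
      simp only [ContinuousLinearMap.add_apply, ContinuousLinearMap.coe_smul',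
        Pi.smul_apply, ContinuousLinearMap.smul_apply, smul_eq_mul, h1, h2]
      rw [← add_mul]
      norm_cast
      rw [haa, Complex.ofReal_one, one_mul]
    · have e1 : ‖(a : ℂ)‖ = a := by
        rw [Complex.norm_real, Real.norm_of_nonneg ha]
      have e2 : ‖(a' : ℂ)‖ = a' := by
        rw [Complex.norm_real, Real.norm_of_nonneg ha']
      calc ‖(a : ℂ) • T + (a' : ℂ) • S‖ ≤ ‖(a : ℂ) • T‖ + ‖(a' : ℂ) • S‖ :=
            ContinuousLinearMap.opNorm_add_le _ _
        _ ≤ ‖(a : ℂ)‖ * ‖T‖ + ‖(a' : ℂ)‖ * ‖S‖ :=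
            add_le_add (ContinuousLinearMap.opNorm_smul_le _ _)
              (ContinuousLinearMap.opNorm_smul_le _ _)
        _ = a * ‖T‖ + a' * ‖S‖ := by rw [e1, e2]
        _ ≤ a * (lam + ε / 2) + a' * (lam + ε / 2) := by
            gcongr
        _ = lam + ε / 2 := by rw [← add_mul, haa, one_mul]
    · intro i
      have : j (a • v i + a' • w i) = (a : ℂ) • j (v i) + (a' : ℂ) • j (w i) := by
        rw [map_add]
        congr 1 <;> rw [← algebraMap_smul ℂ, map_smul] <;> norm_num
      simp only [Pi.add_apply, Pi.smul_apply, this, hvT i, hwT i,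
        ContinuousLinearMap.add_apply, ContinuousLinearMap.smul_apply]
  -- x is in the closure of K
  have hclose : x ∈ closure K := by
    by_contra hxK
    obtain ⟨f, u, hfx, hfK⟩ :=
      RCLike.geometric_hahn_banach_point_closed (𝕜 := ℂ)
        (hKconv.closure) isClosed_closure hxK
    -- coordinate functionals on X obtained from f
    let φ : Fin m → (Dual ℂ X) := fun i =>
      f.comp ⟨LinearMap.single ℂ (fun _ => X) i, by
        have : Continuous fun y : X => (Pi.single i y : Fin m → X) :=
          continuous_single (A := fun _ : Fin m => X) i
        exact this⟩
    haveI : FiniteDimensional ℂ (Submodule.span ℂ (Set.range φ)) :=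
      FiniteDimensional.span_of_finite ℂ (Set.finite_range φ)
    set F' : Subspace ℂ (Dual ℂ X) := F ⊔ Submodule.span ℂ (Set.range φ) with hF'def
    haveI : FiniteDimensional ℂ F' := inferInstance
    have hφF' : ∀ i, φ i ∈ F' := fun i =>
      (le_sup_right : Submodule.span ℂ (Set.range φ) ≤ F')
        (Submodule.subset_span ⟨i, rfl⟩)
    have hFF' : F ≤ F' := le_sup_left
    obtain ⟨T, hT1, hT2, hT3⟩ := hELR F' G inferInstance inferInstance (ε / 2) (by linarith)
    choose v hv using fun i => hT1 ((b i : Dual ℂ (Dual ℂ X))) (hbG i)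
    have hvK : v ∈ K := ⟨T, ⟨hT1, fun g hg f' hf' => hT2 g hg f' (hFF' hf'), hT3.le⟩,
      fun i => hv i⟩
    have hdecomp : ∀ w : Fin m → X, f w = ∑ i, φ i (w i) := by
      intro w
      conv_lhs => rw [← Finset.univ_sum_single w]
      rw [map_sum]
      exact Finset.sum_congr rfl fun i _ => rfl
    have hfeq : f v = f x := by
      rw [hdecomp, hdecomp]
      refine Finset.sum_congr rfl fun i _ => ?_
      have e1 : (j (v i)) (φ i) = (j (x i)) (φ i) := by
        rw [hv i, hx i]
        exact hT2 _ (hbG i) _ (hφF' i)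
      simpa only [hj, dual_def] using e1
    have h1 := hfK v (subset_closure hvK)
    rw [hfeq] at h1
    exact absurd (hfx.trans h1) (lt_irrefl _)
  -- extract a good operator with small defect at the basis vectors
  obtain ⟨v, hvK, hdist⟩ := Metric.mem_closure_iff.mp hclose δ hδpos
  obtain ⟨T, ⟨hT1, hT2, hT3⟩, hvT⟩ := hvK
  have hsmall : ∀ i, ‖((b i : Dual ℂ (Dual ℂ X))) - T ((b i : Dual ℂ (Dual ℂ X)))‖ ≤ δ := by
    intro i
    have e : ((b i : Dual ℂ (Dual ℂ X))) - T ((b i : Dual ℂ (Dual ℂ X)))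
        = j (x i - v i) := by
      rw [map_sub, hx i, hvT i]
    rw [e, hjnorm, ← dist_eq_norm]
    exact (dist_le_pi_dist x v i).trans hdist.le
  -- the key estimate on G₀
  have key : ∀ y : G₀, ‖((y : Dual ℂ (Dual ℂ X))) - T ((y : Dual ℂ (Dual ℂ X)))‖
      ≤ δ * M * ‖y‖ := by
    intro y
    have hrepr : ((y : Dual ℂ (Dual ℂ X))) - T ((y : Dual ℂ (Dual ℂ X)))
        = ∑ i, b.repr y i • (((b i : Dual ℂ (Dual ℂ X))) - T ((b i : Dual ℂ (Dual ℂ X)))) := by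
      have hy : (y : Dual ℂ (Dual ℂ X)) = ∑ i, b.repr y i • ((b i : Dual ℂ (Dual ℂ X))) := by
        conv_lhs => rw [← b.sum_repr y]
        push_cast
        rfl
      rw [Finset.sum_congr rfl fun i _ => smul_sub (b.repr y i) _ (T ((b i : Dual ℂ (Dual ℂ X)))),
        Finset.sum_sub_distrib, ← hy]
      congr 1
      rw [hy, map_sum]
      exact Finset.sum_congr rfl fun i _ => by rw [map_smul]
    rw [hrepr]
    calc ‖∑ i, b.repr y i • (((b i : Dual ℂ (Dual ℂ X))) - T ((b i : Dual ℂ (Dual ℂ X))))‖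
        ≤ ∑ i, ‖b.repr y i • (((b i : Dual ℂ (Dual ℂ X))) - T ((b i : Dual ℂ (Dual ℂ X))))‖ :=
          norm_sum_le _ _
      _ ≤ ∑ i, (‖c i‖ * ‖y‖) * δ := by
          refine Finset.sum_le_sum fun i _ => ?_
          rw [norm_smul]
          have h1 : ‖b.repr y i‖ ≤ ‖c i‖ * ‖y‖ := by
            have : b.repr y i = c i y := by
              simp [c, Module.Basis.coord_apply]
            rw [this]
            exact (c i).le_opNorm y
          exact mul_le_mul h1 (hsmall i) (norm_nonneg _)
            (mul_nonneg ((c i).opNorm_nonneg) (norm_nonneg _))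
      _ = δ * M * ‖y‖ := by
          rw [← Finset.sum_mul, ← Finset.sum_mul]
          ring
  -- the corrected operator
  set Q : Dual ℂ (Dual ℂ X) →L[ℂ] Dual ℂ (Dual ℂ X) := G₀.subtypeL.comp p with hQdef
  have hQapp : ∀ h, Q h = ((p h : G₀) : Dual ℂ (Dual ℂ X)) := fun h => rfl
  have hQmem : ∀ h, Q h ∈ G₀ := fun h => (p h).2
  have hQfix : ∀ g (hg : g ∈ G₀), Q g = g := by
    intro g hg
    have : p g = ⟨g, hg⟩ := hp ⟨g, hg⟩
    rw [hQapp, this]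
  set T' : Dual ℂ (Dual ℂ X) →L[ℂ] Dual ℂ (Dual ℂ X) :=
    T + (ContinuousLinearMap.id ℂ _ - T).comp Q with hT'def
  have hT'app : ∀ h, T' h = T h + (Q h - T (Q h)) := by
    intro h
    simp [hT'def, ContinuousLinearMap.sub_apply]
  refine ⟨T', ?_, ?_, ?_, ?_⟩
  · intro g hg
    rw [← hRmem, hT'app]
    have h1 : T g ∈ R := (hRmem _).2 (hT1 g hg)
    have h2 : Q g ∈ R := (hQmem g).2
    have h3 : T (Q g) ∈ R := (hRmem _).2 (hT1 _ ((hQmem g).1))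
    exact R.add_mem h1 (R.sub_mem h2 h3)
  · intro g hg f hf
    rw [hT'app]
    have h1 := hT2 g hg f hf
    have h2 := hT2 (Q g) ((hQmem g).1) f hf
    simp only [ContinuousLinearMap.add_apply, ContinuousLinearMap.sub_apply, h1, h2]
    ring
  · have hb1 : ‖T'‖ ≤ (lam + ε / 2) + δ * M * ‖p‖ := by
      refine ContinuousLinearMap.opNorm_le_bound _ ?_ fun h => ?_
      · have h0 : (0:ℝ) ≤ δ * M * ‖p‖ :=
          mul_nonneg (mul_nonneg hδpos.le hM) p.opNorm_nonneg
        nlinarith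
      · rw [hT'app]
        have e1 : ‖T h‖ ≤ (lam + ε / 2) * ‖h‖ :=
          (T.le_opNorm h).trans (mul_le_mul_of_nonneg_right hT3 (norm_nonneg h))
        have e2 : ‖Q h - T (Q h)‖ ≤ δ * M * ‖(p h : G₀)‖ := key (p h)
        have e3 : ‖(p h : G₀)‖ ≤ ‖p‖ * ‖h‖ := p.le_opNorm h
        have e4 : ‖Q h - T (Q h)‖ ≤ δ * M * (‖p‖ * ‖h‖) :=
          e2.trans (mul_le_mul_of_nonneg_left e3 (mul_nonneg hδpos.le hM))
        calc ‖T h + (Q h - T (Q h))‖ ≤ ‖T h‖ + ‖Q h - T (Q h)‖ := norm_add_le _ _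
          _ ≤ (lam + ε / 2) * ‖h‖ + δ * M * (‖p‖ * ‖h‖) := add_le_add e1 e4
          _ = ((lam + ε / 2) + δ * M * ‖p‖) * ‖h‖ := by ring
    have hb2 : δ * M * ‖p‖ < ε / 2 := by
      have hA : (0:ℝ) < M * ‖p‖ + 1 := by
        nlinarith [mul_nonneg hM p.opNorm_nonneg]
      have h1 : δ * (M * ‖p‖ + 1) = ε / 2 := by
        rw [hδdef, div_mul_eq_mul_div, mul_comm (2:ℝ) (M * ‖p‖ + 1),
          mul_comm ε (M * ‖p‖ + 1), mul_div_mul_left _ _ hA.ne']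
      nlinarith [mul_nonneg hM p.opNorm_nonneg]
    calc ‖T'‖ ≤ (lam + ε / 2) + δ * M * ‖p‖ := hb1
      _ < lam + ε := by linarith
  · intro g hg hgr
    have hg₀ : g ∈ G₀ := ⟨hg, (hRmem g).2 hgr⟩
    rw [hT'app, hQfix g hg₀]
    abel
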